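/- (Mean ergodic theorem for countable discrete amenable groups.) Let G be a countable group with a Fřlner sequence (F_n), let H be a Hilbert space, and let π : G → U(H) be a group homomorphism into the unitary operators on H. Let P denote the orthogonal projection of H onto the closed subspace { f ∈ H : π(γ) f = f for all γ ∈ G } of G-invariant vectors. Then for every f ∈ H, the averages (1/|F_n|) Σ_{γ ∈ F_n} π(γ⁻¹) f converge in norm to P f as n → ∞. -/

import Mathlib

open Filter Pointwise
open scoped ComplexInnerProductSpace

/-- Mean ergodic theorem for countable discrete amenable groups acting unitarily on a
Hilbert space: the Følner averages converge to the orthogonal projection onto the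
subspace of invariant vectors. -/
theorem stmt_12 {G : Type*} [Group G] [Countable G] [DecidableEq G]
    {H : Type*} [NormedAddCommGroup H] [InnerProductSpace ℂ H] [CompleteSpace H]
    (F : ℕ → Finset G) (hF : ∀ n, (F n).Nonempty)
    (hFolner : ∀ g : G,
      Tendsto (fun n => ((symmDiff (F n) (g • F n)).card : ℝ) / (F n).card) atTop (nhds 0))
    (π : G →* (H ≃ₗᵢ[ℂ] H))
    (V : Submodule ℂ H) (hV : ∀ f : H, f ∈ V ↔ ∀ γ : G, π γ f = f)
    [V.HasOrthogonalProjection] :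
    ∀ f : H,
      Tendsto (fun n => ((F n).card : ℂ)⁻¹ • ∑ γ ∈ F n, π γ⁻¹ f)
        atTop (nhds (V.orthogonalProjectionOnto f : H)) := by
  classical
  set A : ℕ → H → H := fun n x => ((F n).card : ℂ)⁻¹ • ∑ γ ∈ F n, π γ⁻¹ x with hAdef
  have hcard : ∀ n, (0 : ℝ) < (F n).card := fun n => by exact_mod_cast (hF n).card_pos
  have hcardC : ∀ n, ((F n).card : ℂ) ≠ 0 := fun n => by
    exact_mod_cast (hF n).card_pos.ne'
  have hAadd : ∀ n x y, A n (x + y) = A n x + A n y := by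
    intro n x y
    simp [hAdef, map_add, Finset.sum_add_distrib, smul_add]
  have hAsub : ∀ n x y, A n (x - y) = A n x - A n y := by
    intro n x y
    simp [hAdef, map_sub, Finset.sum_sub_distrib, smul_sub]
  have hAsmul : ∀ n (c : ℂ) x, A n (c • x) = c • A n x := by
    intro n c x
    simp only [hAdef, map_smul, ← Finset.smul_sum]
    rw [smul_comm]
  have hAnorm : ∀ n x, ‖A n x‖ ≤ ‖x‖ := by
    intro n x
    have h1 : ‖∑ γ ∈ F n, (π γ⁻¹) x‖ ≤ ∑ γ ∈ F n, ‖(π γ⁻¹) x‖ := norm_sum_le _ _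
    have h2 : ∑ γ ∈ F n, ‖(π γ⁻¹) x‖ = (F n).card * ‖x‖ := by
      simp [LinearIsometryEquiv.norm_map, Finset.sum_const, nsmul_eq_mul]
    calc ‖A n x‖ = ‖((F n).card : ℂ)⁻¹‖ * ‖∑ γ ∈ F n, (π γ⁻¹) x‖ := norm_smul _ _
      _ ≤ ((F n).card : ℝ)⁻¹ * ((F n).card * ‖x‖) := by
          rw [h2] at h1
          apply mul_le_mul _ h1 (norm_nonneg _) (inv_nonneg.2 (hcard n).le)
          simp
      _ = ‖x‖ := by field_simp
  have hAfix : ∀ n, ∀ x ∈ V, A n x = x := by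
    intro n x hx
    have : ∀ γ ∈ F n, (π γ⁻¹) x = x := fun γ _ => (hV x).1 hx γ⁻¹
    rw [hAdef]
    simp only [Finset.sum_congr rfl this, Finset.sum_const, ← Nat.cast_smul_eq_nsmul ℂ,
      smul_smul, inv_mul_cancel₀ (hcardC n), one_smul]
  -- base case: averages of π g v - v tend to 0
  have hbase : ∀ (g : G) (v : H), Tendsto (fun n => A n ((π g) v - v)) atTop (nhds 0) := by
    intro g v
    have key : ∀ n, ‖A n ((π g) v - v)‖ ≤
        ((symmDiff (F n) (g⁻¹ • F n)).card : ℝ) / (F n).card * ‖v‖ := by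
      intro n
      have reindex : ∑ γ ∈ F n, (π γ⁻¹) ((π g) v) = ∑ δ ∈ g⁻¹ • F n, (π δ⁻¹) v := by
        rw [Finset.smul_finset_def, Finset.sum_image (fun a _ b _ h => by
          exact (MulAction.injective (g⁻¹ : G)) h)]
        apply Finset.sum_congr rfl
        intro γ _
        have : (π γ⁻¹) ((π g) v) = (π (γ⁻¹ * g)) v := by
          rw [map_mul]; rfl
        rw [this]
        congr 1
        simp [smul_eq_mul, mul_inv_rev]
      have hsum : A n ((π g) v - v) = ((F n).card : ℂ)⁻¹ •
          (∑ δ ∈ (g⁻¹ • F n) \ F n, (π δ⁻¹) v - ∑ δ ∈ F n \ (g⁻¹ • F n), (π δ⁻¹) v) := by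
        rw [hAdef]
        simp only [map_sub, Finset.sum_sub_distrib, reindex]
        rw [Finset.sum_sdiff_sub_sum_sdiff]
      have hnormsum : ‖∑ δ ∈ (g⁻¹ • F n) \ F n, (π δ⁻¹) v - ∑ δ ∈ F n \ (g⁻¹ • F n), (π δ⁻¹) v‖
          ≤ ((symmDiff (F n) (g⁻¹ • F n)).card : ℝ) * ‖v‖ := by
        have b1 : ‖∑ δ ∈ (g⁻¹ • F n) \ F n, (π δ⁻¹) v‖ ≤ ((g⁻¹ • F n) \ F n).card * ‖v‖ := by
          refine (norm_sum_le _ _).trans ?_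
          simp [LinearIsometryEquiv.norm_map]
        have b2 : ‖∑ δ ∈ F n \ (g⁻¹ • F n), (π δ⁻¹) v‖ ≤ (F n \ (g⁻¹ • F n)).card * ‖v‖ := by
          refine (norm_sum_le _ _).trans ?_
          simp [LinearIsometryEquiv.norm_map]
        have hcardsd : (symmDiff (F n) (g⁻¹ • F n)).card =
            (F n \ (g⁻¹ • F n)).card + ((g⁻¹ • F n) \ F n).card := by
          rw [symmDiff_def]
          exact Finset.card_union_of_disjoint disjoint_sdiff_sdiff
        calc _ ≤ ‖∑ δ ∈ (g⁻¹ • F n) \ F n, (π δ⁻¹) v‖ + ‖∑ δ ∈ F n \ (g⁻¹ • F n), (π δ⁻¹) v‖ :=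
              norm_sub_le _ _
          _ ≤ ((g⁻¹ • F n) \ F n).card * ‖v‖ + (F n \ (g⁻¹ • F n)).card * ‖v‖ := add_le_add b1 b2
          _ = ((symmDiff (F n) (g⁻¹ • F n)).card : ℝ) * ‖v‖ := by
              rw [hcardsd]; push_cast; ring
      rw [hsum, norm_smul]
      have : ‖((F n).card : ℂ)⁻¹‖ = ((F n).card : ℝ)⁻¹ := by simp
      rw [this, div_mul_eq_mul_div, div_eq_inv_mul]
      exact mul_le_mul_of_nonneg_left hnormsum (inv_nonneg.2 (hcard n).le)
    have hto : Tendsto (fun n => ((symmDiff (F n) (g⁻¹ • F n)).card : ℝ) / (F n).card * ‖v‖)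
        atTop (nhds 0) := by
      have := (hFolner g⁻¹).mul_const ‖v‖
      simpa using this
    exact squeeze_zero_norm key hto
  -- span case
  have hspan : ∀ u ∈ Submodule.span ℂ {x : H | ∃ (g : G) (v : H), x = (π g) v - v},
      Tendsto (fun n => A n u) atTop (nhds 0) := by
    intro u hu
    induction hu using Submodule.span_induction with
    | mem x hx =>
        obtain ⟨g, v, rfl⟩ := hx
        exact hbase g v
    | zero =>
        have : ∀ n, A n 0 = 0 := fun n => by simp [hAdef]
        simpa [this] using tendsto_const_nhds
    | add x y _ _ hx hy =>
        have := hx.add hy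
        simp only [add_zero] at this
        exact this.congr fun n => (hAadd n x y).symm
    | smul c x _ hx =>
        have := hx.const_smul c
        simp only [smul_zero] at this
        exact this.congr fun n => (hAsmul n c x).symm
  -- closure case
  have hclos : ∀ u ∈ closure ((Submodule.span ℂ {x : H | ∃ (g : G) (v : H), x = (π g) v - v} : Submodule ℂ H) : Set H),
      Tendsto (fun n => A n u) atTop (nhds 0) := by
    intro u hu
    rw [NormedAddCommGroup.tendsto_nhds_zero]
    intro ε hε
    obtain ⟨s, hs, hds⟩ := Metric.mem_closure_iff.1 hu (ε / 2) (by linarith)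
    have hev : ∀ᶠ n in atTop, ‖A n s‖ < ε / 2 := by
      have := hspan s hs
      rw [NormedAddCommGroup.tendsto_nhds_zero] at this
      exact this (ε / 2) (by linarith)
    filter_upwards [hev] with n hn
    have : A n u = A n (u - s) + A n s := by rw [← hAadd]; congr 1; abel
    calc ‖A n u‖ = ‖A n (u - s) + A n s‖ := by rw [this]
      _ ≤ ‖A n (u - s)‖ + ‖A n s‖ := norm_add_le _ _
      _ ≤ ‖u - s‖ + ‖A n s‖ := by gcongr; exact hAnorm n _
      _ < ε / 2 + ε / 2 := by
          apply add_lt_add _ hn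
          rw [← dist_eq_norm]; exact hds
      _ = ε := by ring
  -- Vᗮ ⊆ closure of span
  have hperp_sub : Vᗮ ≤ (Submodule.span ℂ {x : H | ∃ (g : G) (v : H), x = (π g) v - v}).topologicalClosure := by
    have h1 : (Submodule.span ℂ {x : H | ∃ (g : G) (v : H), x = (π g) v - v})ᗮ ≤ V := by
      intro u hu
      rw [hV]
      intro γ
      have key : ∀ (g : G), (π g⁻¹) u = u := by
        intro g
        have horth : ∀ v : H, ⟪(π g) v - v, u⟫ = 0 := by
          intro v
          exact (Submodule.mem_orthogonal _ u).1 hu _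
            (Submodule.subset_span ⟨g, v, rfl⟩)
        have hadj : ∀ v : H, ⟪v, (π g⁻¹) u - u⟫ = 0 := by
          intro v
          have hgg : (π g) ((π g⁻¹) u) = u := by
            have h3 : (π g) ((π g⁻¹) u) = (π (g * g⁻¹)) u := by rw [map_mul]; rfl
            rw [h3, mul_inv_cancel, map_one]; rfl
          have h2 : ⟪(π g) v, u⟫ = ⟪v, (π g⁻¹) u⟫ := by
            calc ⟪(π g) v, u⟫ = ⟪(π g) v, (π g) ((π g⁻¹) u)⟫ := by rw [hgg]
              _ = ⟪v, (π g⁻¹) u⟫ := (π g).inner_map_map v ((π g⁻¹) u)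
          have h4 := horth v
          rw [inner_sub_left, h2] at h4
          rw [inner_sub_right]
          exact h4
        have := hadj ((π g⁻¹) u - u)
        rw [inner_self_eq_zero] at this
        exact sub_eq_zero.1 this
      have := key γ⁻¹
      rwa [inv_inv] at this
    calc Vᗮ ≤ (Submodule.span ℂ {x : H | ∃ (g : G) (v : H), x = (π g) v - v})ᗮᗮ :=
          Submodule.orthogonal_le h1
      _ = _ := Submodule.orthogonal_orthogonal_eq_closure (𝕜 := ℂ) (E := H) _
  intro f
  have hdecomp : ∀ n, A n f = (V.orthogonalProjectionOnto f : H) +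
      A n (f - (V.orthogonalProjectionOnto f : H)) := by
    intro n
    have : A n f = A n ((V.orthogonalProjectionOnto f : H)) +
        A n (f - (V.orthogonalProjectionOnto f : H)) := by
      rw [← hAadd]; congr 1; abel
    rw [this, hAfix n _ (V.orthogonalProjectionOnto f).2]
  have hmem : f - (V.orthogonalProjectionOnto f : H) ∈ Vᗮ :=
    V.sub_starProjection_mem_orthogonal f
  have hmem2 := hperp_sub hmem
  have htend := hclos _ (by
    rw [← Submodule.topologicalClosure_coe]; exact hmem2)
  have := (tendsto_const_nhds (x := (V.orthogonalProjectionOnto f : H)) (f := atTop)).add htend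
  simp only [add_zero] at this
  exact this.congr fun n => (hdecomp n).symm
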